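/- For m ≥ 2 and the star T^+_{m,1} with center r, stem r', and leaves r_1, …, r_m: if S is a Type II set, then S = {r_1, …, r_m} \ {r_i} for some i, and the unobserved vertices of the attempted power domination by S are exactly {r', r_i}; that is, P^∞(S) = V \ {r', r_i}. -/

import Mathlib

/-- The power domination propagation sequence: `pIter G S 0 = N[S]` and
`pIter G S (k+1)` adds every vertex that is the unique unobserved neighbor
of some observed vertex. -/
def pIter {V : Type*} (G : SimpleGraph V) (S : Set V) : ℕ → Set V
  | 0 => {v | v ∈ S ∨ ∃ s ∈ S, G.Adj s v}
  | k + 1 => pIter G S k ∪ {x | ∃ v ∈ pIter G S k, G.neighborSet v \ pIter G S k = {x}}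

/-- The stable limit `P^∞(S)` of the power domination process. -/
def pInf {V : Type*} (G : SimpleGraph V) (S : Set V) : Set V := ⋃ k, pIter G S k

/-- `S` is a power dominating set for `G` if `P^∞(S) = V`. -/
def PowerDominates {V : Type*} (G : SimpleGraph V) (S : Set V) : Prop :=
  pInf G S = Set.univ

/-- The star `T⁺_{m,1}`: center `r = none` adjacent to the stem
`r' = some none` and to the leaves `r_i = some (some i)` for `i : Fin m`. -/
def starG (m : ℕ) : SimpleGraph (Option (Option (Fin m))) :=
  SimpleGraph.fromRel (fun a _ => a = none)

lemma starG_adj {m : ℕ} {a b : Option (Option (Fin m))} :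
    (starG m).Adj a b ↔ a ≠ b ∧ (a = none ∨ b = none) := by
  simp [starG, SimpleGraph.fromRel_adj]

lemma mem_nbr {m : ℕ} {a b : Option (Option (Fin m))} :
    b ∈ (starG m).neighborSet a ↔ a ≠ b ∧ (a = none ∨ b = none) := starG_adj

lemma pIter_closed {V : Type*} (G : SimpleGraph V) (S C : Set V)
    (h0 : pIter G S 0 ⊆ C)
    (hcl : ∀ v ∈ C, ∀ x, x ∈ G.neighborSet v \ C → ¬ (G.neighborSet v \ C ⊆ {x})) :
    ∀ k, pIter G S k ⊆ C := by
  intro k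
  induction k with
  | zero => exact h0
  | succ k ih =>
    intro y hy
    simp only [pIter, Set.mem_union, Set.mem_setOf_eq] at hy
    rcases hy with hy | ⟨v, hv, hvx⟩
    · exact ih hy
    · by_contra hyC
      have hy' : y ∈ G.neighborSet v \ pIter G S k := by rw [hvx]; exact rfl
      refine hcl v (ih hv) y ⟨hy'.1, hyC⟩ ?_
      intro z hz
      have : z ∈ G.neighborSet v \ pIter G S k := ⟨hz.1, fun h => hz.2 (ih h)⟩
      rw [hvx] at this; exact this

/-- For the star T⁺_{m,1} (m ≥ 2): if S ⊆ V \ {r'} is Type II, then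
S = {r_1, …, r_m} \ {r_i} for some i, and
P^∞(S) = V \ {r', r_i}. -/
theorem stmt15 (m : ℕ) (hm : 2 ≤ m) (S : Set (Option (Option (Fin m))))
    (hS : some none ∉ S)
    (hII : ¬ PowerDominates (starG m) S ∧ PowerDominates (starG m) (S ∪ {some none})) :
    ∃ i : Fin m,
      S = {v | ∃ j : Fin m, j ≠ i ∧ v = some (some j)} ∧
      pInf (starG m) S = ({some none, some (some i)} : Set (Option (Option (Fin m))))ᶜ := by
  obtain ⟨h1, h2⟩ := hII
  -- Step A: none ∉ S
  have hnone : (none : Option (Option (Fin m))) ∉ S := by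
    intro h
    apply h1
    have h0 : pIter (starG m) S 0 = Set.univ := by
      apply Set.eq_univ_of_forall
      intro v
      simp only [pIter, Set.mem_setOf_eq]
      by_cases hv : v = none
      · exact Or.inl (hv ▸ h)
      · exact Or.inr ⟨none, h, starG_adj.mpr ⟨fun e => hv e.symm, Or.inl rfl⟩⟩
    exact Set.eq_univ_of_univ_subset (h0 ▸ Set.subset_iUnion (pIter (starG m) S) 0)
  -- Step B: there is some missing leaf
  have hex : ∃ i : Fin m, some (some i) ∉ S := by
    by_contra hall
    push_neg at hall
    apply h1
    have h0 : pIter (starG m) S 0 = {some none}ᶜ := by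
      ext v
      simp only [pIter, Set.mem_setOf_eq, Set.mem_compl_iff, Set.mem_singleton_iff]
      constructor
      · rintro (hv | ⟨s, hs, hadj⟩)
        · rintro rfl; exact hS hv
        · rcases starG_adj.mp hadj with ⟨hne, (rfl | rfl)⟩
          · exact absurd hs hnone
          · simp
      · intro hv
        match v with
        | none =>
          exact Or.inr ⟨some (some ⟨0, by omega⟩), hall _,
            starG_adj.mpr ⟨by simp, Or.inr rfl⟩⟩
        | some none => exact absurd rfl hv
        | some (some j) => exact Or.inl (hall j)
    have h1' : pIter (starG m) S 1 = Set.univ := by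
      apply Set.eq_univ_of_forall
      intro v
      have hre : pIter (starG m) S 1 = pIter (starG m) S 0 ∪
          {x | ∃ v ∈ pIter (starG m) S 0,
            (starG m).neighborSet v \ pIter (starG m) S 0 = {x}} := rfl
      rw [hre, h0]
      simp only [Set.mem_union, Set.mem_setOf_eq]
      by_cases hv : v = some none
      · subst hv
        refine Or.inr ⟨none, by simp, ?_⟩
        ext w
        simp only [Set.mem_diff, Set.mem_compl_iff, Set.mem_singleton_iff, not_not,
          SimpleGraph.mem_neighborSet, starG_adj]
        constructor
        · rintro ⟨_, hw⟩; exact hw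
        · rintro rfl
          refine ⟨⟨?_, ?_⟩, rfl⟩ <;> simp
      · exact Or.inl (by simpa)
    exact Set.eq_univ_of_univ_subset (h1' ▸ Set.subset_iUnion (pIter (starG m) S) 1)
  obtain ⟨i, hi⟩ := hex
  -- Step C: every other leaf is in S
  have huniq : ∀ j : Fin m, j ≠ i → some (some j) ∈ S := by
    intro j hj
    by_contra hjS
    set C : Set (Option (Option (Fin m))) := insert none (insert (some none) S) with hC
    have hiC : some (some i) ∉ C := by
      simp only [hC, Set.mem_insert_iff]
      push_neg
      exact ⟨by simp, by simp, hi⟩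
    have hjC : some (some j) ∉ C := by
      simp only [hC, Set.mem_insert_iff]
      push_neg
      exact ⟨by simp, by simp, hjS⟩
    have hcl : ∀ v ∈ C, ∀ x, x ∈ (starG m).neighborSet v \ C →
        ¬ ((starG m).neighborSet v \ C ⊆ {x}) := by
      intro v hv x hx hsub
      match v with
      | none =>
        have ha : some (some i) ∈ (starG m).neighborSet none \ C :=
          ⟨mem_nbr.mpr ⟨by simp, Or.inl rfl⟩, hiC⟩
        have hb : some (some j) ∈ (starG m).neighborSet none \ C :=
          ⟨mem_nbr.mpr ⟨by simp, Or.inl rfl⟩, hjC⟩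
        have := (hsub ha).trans (hsub hb).symm
        simp only [Option.some.injEq] at this
        exact hj this.symm
      | some w =>
        rcases mem_nbr.mp hx.1 with ⟨_, (h | rfl)⟩
        · exact Option.some_ne_none w h
        · exact hx.2 (by simp [hC])
    have h0 : pIter (starG m) (S ∪ {some none}) 0 ⊆ C := by
      rintro v hv
      simp only [pIter, Set.mem_setOf_eq] at hv
      rcases hv with hv | ⟨s, hs, hadj⟩
      · rcases hv with hv | hv
        · exact Set.mem_insert_iff.mpr (Or.inr (Set.mem_insert_iff.mpr (Or.inr hv)))
        · simp only [Set.mem_singleton_iff] at hv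
          subst hv
          simp [hC]
      · rcases starG_adj.mp hadj with ⟨_, (rfl | rfl)⟩
        · rcases hs with hs | hs
          · exact absurd hs hnone
          · exact absurd hs (by simp)
        · simp [hC]
    have hsub := pIter_closed (starG m) (S ∪ {some none}) C h0 hcl
    have : some (some i) ∈ pInf (starG m) (S ∪ {some none}) := by rw [h2]; trivial
    rw [pInf, Set.mem_iUnion] at this
    obtain ⟨k, hk⟩ := this
    exact hiC (hsub k hk)
  refine ⟨i, ?_, ?_⟩
  · ext v
    simp only [Set.mem_setOf_eq]
    constructor
    · intro hv
      match v with
      | none => exact absurd hv hnone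
      | some none => exact absurd hv hS
      | some (some j) =>
        refine ⟨j, ?_, rfl⟩
        rintro rfl
        exact hi hv
    · rintro ⟨j, hj, rfl⟩
      exact huniq j hj
  · -- pInf = {some none, some (some i)}ᶜ
    set C : Set (Option (Option (Fin m))) :=
      ({some none, some (some i)} : Set (Option (Option (Fin m))))ᶜ with hC
    have hnoneC : (none : Option (Option (Fin m))) ∈ C := by simp [hC]
    have h0 : pIter (starG m) S 0 = C := by
      ext v
      simp only [pIter, Set.mem_setOf_eq, hC, Set.mem_compl_iff, Set.mem_insert_iff,
        Set.mem_singleton_iff]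
      constructor
      · rintro (hv | ⟨s, hs, hadj⟩)
        · push_neg
          constructor
          · rintro rfl; exact hS hv
          · rintro rfl; exact hi hv
        · rcases starG_adj.mp hadj with ⟨_, (rfl | rfl)⟩
          · exact absurd hs hnone
          · simp
      · intro hv
        push_neg at hv
        match v with
        | none =>
          have hnt : Nontrivial (Fin m) := ⟨⟨⟨0, by omega⟩, ⟨1, by omega⟩, by simp [Fin.ext_iff]⟩⟩
          obtain ⟨j, hj⟩ := exists_ne i
          exact Or.inr ⟨some (some j), huniq j hj, starG_adj.mpr ⟨by simp, Or.inr rfl⟩⟩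
        | some none => exact absurd rfl hv.1
        | some (some j) =>
          refine Or.inl (huniq j ?_)
          rintro rfl
          exact hv.2 rfl
    have hcl : ∀ v ∈ C, ∀ x, x ∈ (starG m).neighborSet v \ C →
        ¬ ((starG m).neighborSet v \ C ⊆ {x}) := by
      intro v hv x hx hsub
      match v with
      | none =>
        have ha : (some none : Option (Option (Fin m))) ∈ (starG m).neighborSet none \ C :=
          ⟨mem_nbr.mpr ⟨by simp, Or.inl rfl⟩, by simp [hC]⟩
        have hb : some (some i) ∈ (starG m).neighborSet none \ C :=
          ⟨mem_nbr.mpr ⟨by simp, Or.inl rfl⟩, by simp [hC]⟩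
        have := (hsub ha).trans (hsub hb).symm
        simp at this
      | some w =>
        rcases mem_nbr.mp hx.1 with ⟨_, (h | rfl)⟩
        · exact Option.some_ne_none w h
        · exact hx.2 hnoneC
    have hsub := pIter_closed (starG m) S C h0.le hcl
    refine Set.Subset.antisymm (Set.iUnion_subset hsub) ?_
    rw [← h0]
    exact Set.subset_iUnion (pIter (starG m) S) 0
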